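/- For g ∈ S_m with cycles c_1,…,c_r and h ∈ S_n, equality ind(g,e) = ind(g,h) holds (with respect to the product action embedding into S_{mn}) if and only if the order of h divides gcd_i(|c_i|), i.e. ord(h) divides the length of every cycle of g. -/

import Mathlib

/-- The multiset of all cycle lengths of a permutation, counting fixed points as 1-cycles. -/
def fullCycleType {α : Type*} [Fintype α] [DecidableEq α] (σ : Equiv.Perm α) : Multiset ℕ :=
  σ.cycleType + Multiset.replicate (Fintype.card α - σ.support.card) 1

/-- The number of cycles of a permutation (fixed points counted as 1-cycles),
i.e. the number of orbits of the cyclic group it generates. -/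
def cycleCount {α : Type*} [Fintype α] [DecidableEq α] (σ : Equiv.Perm α) : ℕ :=
  Multiset.card (fullCycleType σ)

/-- `ind σ = N - (number of cycles of σ)` for `σ` a permutation of a set of size `N`. -/
def ind {α : Type*} [Fintype α] [DecidableEq α] (σ : Equiv.Perm α) : ℕ :=
  Fintype.card α - cycleCount σ

section Aux

set_option linter.unusedSectionVars false

variable {α : Type*} [Fintype α] [DecidableEq α]

/-- periodic point characterization -/
lemma perm_minimalPeriod_dvd_iff (σ : Equiv.Perm α) (x : α) (k : ℕ) :
    Function.minimalPeriod ⇑σ x ∣ k ↔ (σ ^ k) x = x := by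
  rw [← Function.isPeriodicPt_iff_minimalPeriod_dvd]
  unfold Function.IsPeriodicPt Function.IsFixedPt
  rw [← Equiv.Perm.coe_pow]

lemma perm_minimalPeriod_eq_orderOf_cycleOf (σ : Equiv.Perm α) (x : α) :
    Function.minimalPeriod ⇑σ x = orderOf (σ.cycleOf x) := by
  apply Nat.dvd_antisymm
  · rw [perm_minimalPeriod_dvd_iff, ← Equiv.Perm.cycleOf_pow_apply_self,
      pow_orderOf_eq_one, Equiv.Perm.one_apply]
  · rw [orderOf_dvd_iff_pow_eq_one]
    by_cases hx : σ x = x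
    · rw [(Equiv.Perm.cycleOf_eq_one_iff σ).2 hx, one_pow]
    · rw [(σ.isCycle_cycleOf hx).pow_eq_one_iff'
        (x := x) (by rwa [Equiv.Perm.cycleOf_apply_self]),
        Equiv.Perm.cycleOf_pow_apply_self, ← perm_minimalPeriod_dvd_iff]

lemma perm_minimalPeriod_eq_one (σ : Equiv.Perm α) {x : α} (hx : σ x = x) :
    Function.minimalPeriod ⇑σ x = 1 := by
  rw [perm_minimalPeriod_eq_orderOf_cycleOf, (Equiv.Perm.cycleOf_eq_one_iff σ).2 hx, orderOf_one]

lemma sum_inv_minimalPeriod (σ : Equiv.Perm α) :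
    ∑ x : α, ((Function.minimalPeriod ⇑σ x : ℚ))⁻¹ = cycleCount σ := by
  rw [← Finset.sum_add_sum_compl σ.support]
  have h1 : ∑ x ∈ σ.supportᶜ, ((Function.minimalPeriod ⇑σ x : ℚ))⁻¹
      = (Fintype.card α - σ.support.card : ℕ) := by
    rw [Finset.sum_congr rfl (fun x hx => ?_), Finset.sum_const, Finset.card_compl, nsmul_eq_mul,
      mul_one]
    · rw [perm_minimalPeriod_eq_one σ (by simpa using (Finset.mem_compl.1 hx)),
        Nat.cast_one, inv_one]
  have h2 : ∑ x ∈ σ.support, ((Function.minimalPeriod ⇑σ x : ℚ))⁻¹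
      = (Multiset.card σ.cycleType : ℕ) := by
    rw [← Finset.sum_fiberwise_of_maps_to (g := σ.cycleOf) (t := σ.cycleFactorsFinset)
      (fun x hx => Equiv.Perm.cycleOf_mem_cycleFactorsFinset_iff.2 (by simpa using hx))]
    have key : ∀ c ∈ σ.cycleFactorsFinset,
        ∑ x ∈ σ.support.filter (fun x => σ.cycleOf x = c),
          ((Function.minimalPeriod ⇑σ x : ℚ))⁻¹ = 1 := by
      intro c hc
      have hcyc := (Equiv.Perm.mem_cycleFactorsFinset_iff.1 hc).1
      have hfil : σ.support.filter (fun x => σ.cycleOf x = c) = c.support := by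
        ext x
        simp only [Finset.mem_filter]
        constructor
        · rintro ⟨hx, rfl⟩
          exact ((Equiv.Perm.eq_cycleOf_of_mem_cycleFactorsFinset_iff σ _ hc x).1 rfl)
        · intro hx
          refine ⟨?_, ((Equiv.Perm.eq_cycleOf_of_mem_cycleFactorsFinset_iff σ c hc x).2 hx).symm⟩
          have := (Equiv.Perm.mem_cycleFactorsFinset_iff.1 hc).2 x hx
          rw [Equiv.Perm.mem_support] at hx ⊢
          rwa [← this]
      rw [hfil, Finset.sum_congr rfl (fun x hx => ?_), Finset.sum_const, nsmul_eq_mul]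
      · rw [mul_inv_cancel₀]
        have hpos : 0 < c.support.card := lt_of_lt_of_le (by norm_num) hcyc.two_le_card_support
        exact_mod_cast hpos.ne'
      · rw [perm_minimalPeriod_eq_orderOf_cycleOf,
          ← (Equiv.Perm.eq_cycleOf_of_mem_cycleFactorsFinset_iff σ c hc x).2 hx,
          hcyc.orderOf]
    rw [Finset.sum_congr rfl key, Finset.sum_const, nsmul_eq_mul, mul_one,
      Equiv.Perm.cycleType_def, Multiset.card_map]
    rfl
  rw [h1, h2, cycleCount, fullCycleType, Multiset.card_add, Multiset.card_replicate,
    Nat.cast_add]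

lemma mem_fullCycleType_iff (σ : Equiv.Perm α) (c : ℕ) :
    c ∈ fullCycleType σ ↔ ∃ x : α, Function.minimalPeriod ⇑σ x = c := by
  constructor
  · intro hc
    rcases Multiset.mem_add.1 hc with hc | hc
    · rw [Equiv.Perm.cycleType_def, Multiset.mem_map] at hc
      obtain ⟨f, hf, rfl⟩ := hc
      rw [Finset.mem_val] at hf
      have hcyc := (Equiv.Perm.mem_cycleFactorsFinset_iff.1 hf).1
      obtain ⟨x, hx⟩ := Finset.card_pos.1 (lt_of_lt_of_le (by norm_num) hcyc.two_le_card_support)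
      exact ⟨x, by rw [perm_minimalPeriod_eq_orderOf_cycleOf,
        ← Equiv.Perm.cycle_is_cycleOf hx hf, hcyc.orderOf]; rfl⟩
    · obtain rfl := Multiset.eq_of_mem_replicate hc
      have hne := (Multiset.mem_replicate.1 hc).1
      have : σ.support ≠ Finset.univ := by
        intro hme
        rw [hme, Finset.card_univ, Nat.sub_self] at hne
        exact hne rfl
      obtain ⟨x, hx⟩ : σ.supportᶜ.Nonempty := by
        rw [← Finset.card_pos, Finset.card_compl]
        have : σ.support.card ≤ Fintype.card α := by simpa using Finset.card_le_univ σ.support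
        omega
      exact ⟨x, perm_minimalPeriod_eq_one σ (by simpa using hx)⟩
  · rintro ⟨x, rfl⟩
    by_cases hx : σ x = x
    · refine Multiset.mem_add.2 (Or.inr ?_)
      rw [perm_minimalPeriod_eq_one σ hx, Multiset.mem_replicate]
      refine ⟨?_, rfl⟩
      have : σ.support.card < Fintype.card α := by
        rw [← Finset.card_univ]
        exact Finset.card_lt_card ((Finset.subset_univ _).ssubset_of_ne (fun hme => by
          have := hme ▸ Finset.mem_univ x
          exact (Equiv.Perm.mem_support.1 this) hx))
      omega
    · refine Multiset.mem_add.2 (Or.inl ?_)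
      rw [Equiv.Perm.cycleType_def, Multiset.mem_map]
      refine ⟨σ.cycleOf x, Finset.mem_def.1
        (Equiv.Perm.cycleOf_mem_cycleFactorsFinset_iff.2 (Equiv.Perm.mem_support.2 hx)), ?_⟩
      rw [perm_minimalPeriod_eq_orderOf_cycleOf, (σ.isCycle_cycleOf hx).orderOf]; rfl

lemma orderOf_dvd_iff_forall_minimalPeriod_dvd (σ : Equiv.Perm α) (k : ℕ) :
    orderOf σ ∣ k ↔ ∀ x : α, Function.minimalPeriod ⇑σ x ∣ k := by
  constructor
  · intro hd x
    refine dvd_trans ?_ hd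
    rw [perm_minimalPeriod_dvd_iff, pow_orderOf_eq_one, Equiv.Perm.one_apply]
  · intro hall
    rw [orderOf_dvd_iff_pow_eq_one]
    ext x
    rw [(perm_minimalPeriod_dvd_iff σ x k).1 (hall x), Equiv.Perm.one_apply]

lemma cycleCount_le_card (σ : Equiv.Perm α) : cycleCount σ ≤ Fintype.card α := by
  have h1 : ∀ x ∈ fullCycleType σ, 1 ≤ x := by
    intro x hx
    rcases Multiset.mem_add.1 hx with hx | hx
    · exact le_trans (by norm_num) (Equiv.Perm.two_le_of_mem_cycleType hx)
    · exact (Multiset.eq_of_mem_replicate hx).ge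
  have h2 : (fullCycleType σ).sum = Fintype.card α := by
    rw [fullCycleType, Multiset.sum_add, Equiv.Perm.sum_cycleType, Multiset.sum_replicate,
      smul_eq_mul, mul_one]
    have : σ.support.card ≤ Fintype.card α := by
      simpa using Finset.card_le_univ σ.support
    omega
  calc cycleCount σ = Multiset.card (fullCycleType σ) • 1 := by simp [cycleCount]
    _ ≤ (fullCycleType σ).sum := Multiset.card_nsmul_le_sum h1
    _ = _ := h2

end Aux

theorem stmt_3 {m n : ℕ} (g : Equiv.Perm (Fin m)) (h : Equiv.Perm (Fin n)) :
    ind (g.prodCongr (1 : Equiv.Perm (Fin n))) = ind (g.prodCongr h) ↔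
    ∀ c ∈ fullCycleType g, orderOf h ∣ c := by
  have ha : ∀ x, 0 < Function.minimalPeriod ⇑g x := fun x => by
    rw [perm_minimalPeriod_eq_orderOf_cycleOf]; exact orderOf_pos _
  have hb : ∀ y, 0 < Function.minimalPeriod ⇑h y := fun y => by
    rw [perm_minimalPeriod_eq_orderOf_cycleOf]; exact orderOf_pos _
  have hper1 : ∀ z : Fin m × Fin n,
      Function.minimalPeriod ⇑(g.prodCongr (1 : Equiv.Perm (Fin n))) z
        = Function.minimalPeriod ⇑g z.1 := by
    intro z
    have hc : ⇑(g.prodCongr (1 : Equiv.Perm (Fin n)))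
        = Prod.map ⇑g ⇑(1 : Equiv.Perm (Fin n)) := rfl
    rw [hc, Function.minimalPeriod_prodMap, Equiv.Perm.coe_one, Function.minimalPeriod_id,
      Nat.lcm_one_right]
  have hper2 : ∀ z : Fin m × Fin n,
      Function.minimalPeriod ⇑(g.prodCongr h) z
        = Nat.lcm (Function.minimalPeriod ⇑g z.1) (Function.minimalPeriod ⇑h z.2) := by
    intro z
    have hc : ⇑(g.prodCongr h) = Prod.map ⇑g ⇑h := rfl
    rw [hc, Function.minimalPeriod_prodMap]
  have key : cycleCount (g.prodCongr (1 : Equiv.Perm (Fin n))) = cycleCount (g.prodCongr h)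
      ↔ ∀ z : Fin m × Fin n,
          Function.minimalPeriod ⇑h z.2 ∣ Function.minimalPeriod ⇑g z.1 := by
    rw [← Nat.cast_inj (R := ℚ), ← sum_inv_minimalPeriod, ← sum_inv_minimalPeriod]
    simp only [hper1, hper2]
    have hle : ∀ z : Fin m × Fin n, z ∈ Finset.univ →
        ((Nat.lcm (Function.minimalPeriod ⇑g z.1) (Function.minimalPeriod ⇑h z.2) : ℚ))⁻¹
          ≤ ((Function.minimalPeriod ⇑g z.1 : ℚ))⁻¹ := by
      intro z _
      apply inv_anti₀
      · exact_mod_cast ha z.1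
      · exact_mod_cast Nat.le_of_dvd (Nat.lcm_pos (ha z.1) (hb z.2)) (Nat.dvd_lcm_left _ _)
    rw [eq_comm, Finset.sum_eq_sum_iff_of_le hle]
    constructor
    · intro H z
      have := H z (Finset.mem_univ z)
      rw [inv_inj, Nat.cast_inj] at this
      exact this ▸ Nat.dvd_lcm_right _ _
    · intro H z _
      rw [inv_inj, Nat.cast_inj]
      exact Nat.dvd_antisymm (Nat.lcm_dvd dvd_rfl (H z)) (Nat.dvd_lcm_left _ _)
  have h1 := cycleCount_le_card (g.prodCongr (1 : Equiv.Perm (Fin n)))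
  have h2 := cycleCount_le_card (g.prodCongr h)
  have hind : ind (g.prodCongr (1 : Equiv.Perm (Fin n))) = ind (g.prodCongr h)
      ↔ cycleCount (g.prodCongr (1 : Equiv.Perm (Fin n))) = cycleCount (g.prodCongr h) := by
    unfold ind
    omega
  rw [hind, key]
  constructor
  · intro H c hc
    obtain ⟨x, rfl⟩ := (mem_fullCycleType_iff g c).1 hc
    exact (orderOf_dvd_iff_forall_minimalPeriod_dvd h _).2 (fun y => H (x, y))
  · intro H z
    exact dvd_trans
      ((orderOf_dvd_iff_forall_minimalPeriod_dvd h (orderOf h)).1 dvd_rfl z.2)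
      (H _ ((mem_fullCycleType_iff g _).2 ⟨z.1, rfl⟩))
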